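/- Let l ≥ 1 and let ε : ZMod l → ℤ be a function taking values in {−1, 0, 1}, viewed as a cyclic sequence (indices taken modulo l). Fix n ≥ 1. Call a pair (s, t) of integers with s ≤ t < s + l a free linear segment of level n if: ε(s) = −1, ε(t) = 1, ∑_{i=s}^{t} ε(i) = 0, for all j with s ≤ j < t one has −n ≤ ∑_{i=s}^{j} ε(i) < 0, and there exists j₀ with s ≤ j₀ < t and ∑_{i=s}^{j₀} ε(i) = −n. Then no two distinct free linear segments of level n have the same starting index s (mod l), and no two have the same ending index t (mod l). -/

import Mathlib

/-- `(s, t)` is a free linear segment of level `n` of the cyclic sequence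
`ε : ZMod l → ℤ` (indices taken modulo `l`): `s ≤ t < s + l`, `ε s = -1`, `ε t = 1`,
the total sum over `[s, t]` is `0`, all proper partial sums lie in `[-n, 0)`, and
some partial sum equals `-n`. -/
def IsFreeSegment (l : ℕ) (ε : ZMod l → ℤ) (n : ℕ) (s t : ℤ) : Prop :=
  s ≤ t ∧ t < s + l ∧ ε (s : ZMod l) = -1 ∧ ε (t : ZMod l) = 1 ∧
    (∑ i ∈ Finset.Icc s t, ε (i : ZMod l)) = 0 ∧
    (∀ j : ℤ, s ≤ j → j < t →
      -(n : ℤ) ≤ (∑ i ∈ Finset.Icc s j, ε (i : ZMod l)) ∧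
        (∑ i ∈ Finset.Icc s j, ε (i : ZMod l)) < 0) ∧
    (∃ j₀ : ℤ, s ≤ j₀ ∧ j₀ < t ∧ (∑ i ∈ Finset.Icc s j₀, ε (i : ZMod l)) = -(n : ℤ))

private lemma sum_shift (l : ℕ) (ε : ZMod l → ℤ) (a b k : ℤ) :
    (∑ i ∈ Finset.Icc (a + k * l) (b + k * l), ε (i : ZMod l))
      = ∑ i ∈ Finset.Icc a b, ε (i : ZMod l) := by
  rw [← Finset.map_add_right_Icc, Finset.sum_map]
  refine Finset.sum_congr rfl fun i _ => ?_
  congr 1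
  simp [addRightEmbedding]

private lemma shift_free (l : ℕ) (ε : ZMod l → ℤ) (n : ℕ) (s t k : ℤ)
    (h : IsFreeSegment l ε n s t) :
    IsFreeSegment l ε n (s + k * l) (t + k * l) := by
  obtain ⟨h1, h2, h3, h4, h5, h6, j₀, hj1, hj2, hj3⟩ := h
  have cast_eq : ∀ a : ℤ, ((a + k * l : ℤ) : ZMod l) = (a : ZMod l) := by
    intro a; push_cast; simp
  refine ⟨by linarith, by linarith, by rwa [cast_eq], by rwa [cast_eq],
    by rwa [sum_shift], ?_, j₀ + k * l, by linarith, by linarith, ?_⟩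
  · intro j hj1 hj2
    have := h6 (j - k * l) (by linarith) (by linarith)
    have hs : (∑ i ∈ Finset.Icc (s + k * l) j, ε (i : ZMod l))
        = ∑ i ∈ Finset.Icc s (j - k * l), ε (i : ZMod l) := by
      have := sum_shift l ε s (j - k * l) k
      simpa using this
    rw [hs]; exact this
  · rw [sum_shift]; exact hj3

private lemma sum_split (l : ℕ) (ε : ZMod l → ℤ) (a b c : ℤ) (hab : a ≤ b) (hbc : b ≤ c) :
    (∑ i ∈ Finset.Icc a c, ε (i : ZMod l))
      = (∑ i ∈ Finset.Icc a (b - 1), ε (i : ZMod l))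
        + ∑ i ∈ Finset.Icc b c, ε (i : ZMod l) := by
  have hIcc : ∀ x y : ℤ, Finset.Icc x y = Finset.Ioc (x - 1) y := by
    intro x y; ext i; simp [Finset.mem_Icc, Finset.mem_Ioc]
  rw [hIcc a c, hIcc a (b - 1), hIcc b c,
    ← Finset.Ioc_union_Ioc_eq_Ioc (by omega : a - 1 ≤ b - 1) (by omega : b - 1 ≤ c),
    Finset.sum_union]
  rw [Finset.disjoint_left]
  intro x hx hx'
  simp only [Finset.mem_Ioc] at hx hx'
  omega

private lemma same_start (l : ℕ) (ε : ZMod l → ℤ) (n : ℕ) (s t₁ t₂ : ℤ)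
    (h₁ : IsFreeSegment l ε n s t₁) (h₂ : IsFreeSegment l ε n s t₂) : t₁ = t₂ := by
  rcases lt_trichotomy t₁ t₂ with h | h | h
  · have := (h₂.2.2.2.2.2.1 t₁ h₁.1 h).2
    rw [h₁.2.2.2.2.1] at this; exact absurd this (by norm_num)
  · exact h
  · have := (h₁.2.2.2.2.2.1 t₂ h₂.1 h).2
    rw [h₂.2.2.2.2.1] at this; exact absurd this (by norm_num)

private lemma same_end (l : ℕ) (ε : ZMod l → ℤ) (n : ℕ) (s₁ s₂ t : ℤ)
    (h₁ : IsFreeSegment l ε n s₁ t) (h₂ : IsFreeSegment l ε n s₂ t) : s₁ = s₂ := by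
  have key : ∀ a b : ℤ, IsFreeSegment l ε n a t → IsFreeSegment l ε n b t → a < b → False := by
    intro a b ha hb hab
    have hsplit := sum_split l ε a b t hab.le hb.1
    rw [ha.2.2.2.2.1, hb.2.2.2.2.1] at hsplit
    have := (ha.2.2.2.2.2.1 (b - 1) (by omega) (by have := hb.1; omega)).2
    omega
  rcases lt_trichotomy s₁ s₂ with h | h | h
  · exact absurd (key s₁ s₂ h₁ h₂ h) (by simp)
  · exact h
  · exact absurd (key s₂ s₁ h₂ h₁ h) (by simp)

/-- No two distinct free linear segments of level `n` of a cyclic `{-1,0,1}`-valued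
sequence have the same starting index mod `l`, and no two have the same ending index
mod `l`: if the starting (resp. ending) indices agree modulo `l`, the segments coincide
up to the cyclic identification, i.e. they have the same length `t - s`. -/
theorem freeSegment_start_end_unique (l : ℕ) (hl : 1 ≤ l) (ε : ZMod l → ℤ)
    (hε : ∀ i, ε i = -1 ∨ ε i = 0 ∨ ε i = 1) (n : ℕ) (hn : 1 ≤ n)
    (s₁ t₁ s₂ t₂ : ℤ) (h₁ : IsFreeSegment l ε n s₁ t₁) (h₂ : IsFreeSegment l ε n s₂ t₂) :
    ((s₁ : ZMod l) = (s₂ : ZMod l) → t₁ - s₁ = t₂ - s₂) ∧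
      ((t₁ : ZMod l) = (t₂ : ZMod l) → t₁ - s₁ = t₂ - s₂) := by
  constructor
  · intro hs
    have hdvd : (l : ℤ) ∣ s₂ - s₁ :=
      Int.ModEq.dvd ((ZMod.intCast_eq_intCast_iff _ _ _).mp hs)
    obtain ⟨k, hk⟩ := hdvd
    have hk' : s₂ = s₁ + k * l := by rw [mul_comm] at hk; linarith
    have h₂' : IsFreeSegment l ε n s₁ (t₂ + -k * l) := by
      have := shift_free l ε n s₂ t₂ (-k) h₂
      rwa [(by linarith : s₂ + -k * l = s₁)] at this
    have := same_start l ε n s₁ t₁ (t₂ + -k * l) h₁ h₂'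
    linarith
  · intro ht
    have hdvd : (l : ℤ) ∣ t₂ - t₁ :=
      Int.ModEq.dvd ((ZMod.intCast_eq_intCast_iff _ _ _).mp ht)
    obtain ⟨k, hk⟩ := hdvd
    have hk' : t₂ = t₁ + k * l := by rw [mul_comm] at hk; linarith
    have h₂' : IsFreeSegment l ε n (s₂ + -k * l) t₁ := by
      have := shift_free l ε n s₂ t₂ (-k) h₂
      rwa [(by linarith : t₂ + -k * l = t₁)] at this
    have := same_end l ε n s₁ (s₂ + -k * l) t₁ h₁ h₂'
    linarith
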